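/- For every integer i ≥ 2, the double factorial satisfies the summation formula (2i−1)!! = Σ_{k=1}^{i} C(i,k) · (2k−3)!! · (2(i−k)−1)!!, where C(i,k) = i!/(k!(i−k)!) is the binomial coefficient. -/

import Mathlib

open Finset Nat

lemma odd_df (k : ℕ) : (2*k+1)‼ = (2*k+1) * (2*k-1)‼ := by
  cases k with
  | zero => simp [Nat.doubleFactorial]
  | succ m =>
    rw [show 2*(m+1)+1 = (2*m+1)+2 from by omega, Nat.doubleFactorial_add_two,
        show 2*(m+1)-1 = 2*m+1 from by omega]

def Bsum (n : ℕ) : ℕ := ∑ k ∈ range (n+1), n.choose k * ((2*k-1)‼ * (2*(n-k)-1)‼)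

lemma B_rec (n : ℕ) : Bsum (n+1) = (2*n+2) * Bsum n := by
  unfold Bsum
  rw [Finset.sum_range_succ']
  have h2 : (∑ k ∈ range (n+1), (n+1).choose (k+1) * ((2*(k+1)-1)‼ * (2*(n+1-(k+1))-1)‼))
      = ∑ k ∈ range (n+1),
        (n.choose k * ((2*k+1)‼ * (2*(n-k)-1)‼) + n.choose (k+1) * ((2*k+1)‼ * (2*(n-k)-1)‼)) := by
    refine Finset.sum_congr rfl fun k hk => ?_
    rw [Nat.choose_succ_succ, show 2*(k+1)-1 = 2*k+1 from by omega,
        show n+1-(k+1) = n-k from by omega, Nat.add_mul]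
  rw [h2, Finset.sum_add_distrib]
  have h3 : (∑ k ∈ range (n+1), n.choose (k+1) * ((2*k+1)‼ * (2*(n-k)-1)‼))
        + (n+1).choose 0 * ((2*0-1)‼ * (2*(n+1-0)-1)‼)
      = ∑ k ∈ range (n+1), n.choose k * ((2*k-1)‼ * (2*(n-k)+1)‼) := by
    rw [Finset.sum_range_succ' (fun k => n.choose k * ((2*k-1)‼ * (2*(n-k)+1)‼)) n,
        Finset.sum_range_succ]
    simp only [Nat.choose_self, Nat.choose_succ_self, Nat.choose_zero_right, zero_mul, add_zero]
    congr 1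
    refine Finset.sum_congr rfl fun k hk => ?_
    simp only [mem_range] at hk
    rw [show 2*(k+1)-1 = 2*k+1 from by omega, show 2*(n-(k+1))+1 = 2*(n-k)-1 from by omega]
  rw [add_assoc, h3, Finset.mul_sum, ← Finset.sum_add_distrib]
  refine Finset.sum_congr rfl fun k hk => ?_
  simp only [mem_range] at hk
  rw [odd_df k, odd_df (n-k), show 2*n+2 = (2*k+1) + (2*(n-k)+1) from by omega]
  ring

lemma kpart (n : ℕ) :
    ∑ j ∈ range (n+1), (j+1) * (n.succ.choose (j+1) * ((2*j-1)‼ * (2*(n-j)-1)‼))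
      = (n+1) * Bsum n := by
  unfold Bsum
  rw [Finset.mul_sum]
  refine Finset.sum_congr rfl fun j hj => ?_
  rw [← mul_assoc, ← mul_assoc, mul_comm (j+1) (n.succ.choose (j+1)),
      ← Nat.add_one_mul_choose_eq]
  ring

def Asum (n : ℕ) : ℕ := ∑ j ∈ range n, n.choose (j+1) * ((2*j-1)‼ * (2*(n-j-1)-1)‼)

lemma A_rec (m : ℕ) : Asum (m+2) = (2*m+3) * Asum (m+1) := by
  have e1 : Asum (m+2) = Bsum (m+1)
      + ∑ j ∈ range (m+1), (m+1).choose (j+1) * ((2*j-1)‼ * ((2*(m-j)+1) * (2*(m-j)-1)‼)) := by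
    unfold Asum Bsum
    have : ∀ j ∈ range (m+2), (m+2).choose (j+1) * ((2*j-1)‼ * (2*(m+2-j-1)-1)‼)
        = (m+1).choose j * ((2*j-1)‼ * (2*(m+1-j)-1)‼)
          + (m+1).choose (j+1) * ((2*j-1)‼ * (2*(m+1-j)-1)‼) := by
      intro j hj
      rw [show m+2-j-1 = m+1-j from by omega, Nat.choose_succ_succ, Nat.add_mul]
    rw [Finset.sum_congr rfl this, Finset.sum_add_distrib,
        Finset.sum_range_succ (fun j => (m+1).choose (j+1) * ((2*j-1)‼ * (2*(m+1-j)-1)‼)) (m+1)]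
    simp only [Nat.choose_succ_self, zero_mul, add_zero]
    congr 1
    refine Finset.sum_congr rfl fun j hj => ?_
    simp only [mem_range] at hj
    rw [show 2*(m+1-j)-1 = 2*(m-j)+1 from by omega, odd_df (m-j)]
  have e2 : Bsum (m+1) = ∑ j ∈ range (m+1),
      (2*(j+1)) * ((m+1).choose (j+1) * ((2*j-1)‼ * (2*(m-j)-1)‼)) := by
    rw [B_rec, show 2*m+2 = 2*(m+1) from by omega, mul_assoc, ← kpart, Finset.mul_sum]
    refine Finset.sum_congr rfl fun j hj => ?_
    rw [Nat.succ_eq_add_one, mul_assoc]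
  rw [e1, e2, ← Finset.sum_add_distrib]
  unfold Asum
  rw [Finset.mul_sum]
  refine Finset.sum_congr rfl fun j hj => ?_
  simp only [mem_range] at hj
  rw [show m+1-j-1 = m-j from by omega, show 2*m+3 = 2*(j+1) + (2*(m-j)+1) from by omega]
  ring

lemma A_val (i : ℕ) (hi : 2 ≤ i) : (2*i-1)‼ = Asum i := by
  induction i, hi using Nat.le_induction with
  | base => decide
  | succ n hn ih =>
    obtain ⟨m, rfl⟩ : ∃ m, n = m+1 := ⟨n-1, by omega⟩
    rw [A_rec, ← ih, show 2*(m+1+1)-1 = (2*(m+1)-1)+2 from by omega,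
        Nat.doubleFactorial_add_two, show 2*(m+1)-1+2 = 2*m+3 from by omega]

/-- Double factorial summation formula: for every integer `i ≥ 2`,
`(2i−1)!! = Σ_{k=1}^{i} C(i,k) · (2k−3)!! · (2(i−k)−1)!!`,
with natural-number subtraction truncating negative arguments to `0` and `0‼ = 1`,
matching the convention `(−1)!! = 1`. -/
theorem double_factorial_summation (i : ℕ) (hi : 2 ≤ i) :
    (2 * i - 1)‼ =
      ∑ k ∈ Finset.Icc 1 i, i.choose k * (2 * k - 3)‼ * (2 * (i - k) - 1)‼ := by
  rw [A_val i hi]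
  unfold Asum
  rw [← Finset.Ico_add_one_right_eq_Icc, Finset.sum_Ico_eq_sum_range,
      show i+1-1 = i from by omega]
  refine Finset.sum_congr rfl fun j hj => ?_
  rw [show 1+j = j+1 from by omega, show 2*(j+1)-3 = 2*j-1 from by omega,
      show i-(j+1) = i-j-1 from by omega, mul_assoc]
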